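/- arXiv:2508.01914 — 2 statements merged into one kernel-verified Lean document; each statement's English description precedes it below -/
import Mathlib

section
/- Let (Ω, 𝔽, ℙ) be a probability space, H a separable complex Hilbert space, and (Ψ_k)_{k∈ℕ} an i.i.d. sequence of strongly measurable random operators on H taking values in positive contractions, satisfying the coercivity condition 𝔼‖Ψ_k x‖² ≥ C‖x‖² for all x ∈ H with a constant 0 < C < 1. With R₀ = I and R_n = (I − Ψ_n)⋯(I − Ψ₁), for every x ∈ H and every δ > 0 one has Σ_{n=0}^{∞} ℙ(‖R_n x‖ > δ) ≤ ‖x‖² / (δ² C) < ∞. -/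
open MeasureTheory ProbabilityTheory Filter
open scoped ENNReal NNReal InnerProductSpace

/-- The σ-algebra on `B(H)` generated by the point evaluations `T ↦ T x`, i.e. the σ-algebra
corresponding to measurability in the strong operator sense. -/
noncomputable def strongMS (H : Type*) [NormedAddCommGroup H] [InnerProductSpace ℂ H] :
    MeasurableSpace (H →L[ℂ] H) :=
  ⨆ x : H, (borel H).comap fun T => T x

/-- The residual products `R₀ = I`, `R_n(ω) = (I - Ψ_n(ω))⋯(I - Ψ₁(ω))`.
Random operators are indexed starting from `1`, i.e. `Ψ 1, Ψ 2, …`. -/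
noncomputable def residualProd {Ω H : Type*} [NormedAddCommGroup H] [InnerProductSpace ℂ H]
    (Ψ : ℕ → Ω → (H →L[ℂ] H)) (ω : Ω) : ℕ → (H →L[ℂ] H)
  | 0 => 1
  | n + 1 => (1 - Ψ (n + 1) ω) * residualProd Ψ ω n

section Aux
variable {H : Type*} [NormedAddCommGroup H] [InnerProductSpace ℂ H] [CompleteSpace H]

lemma aux_norm_sq_add_le (T : H →L[ℂ] H) (h0 : 0 ≤ T) (h1 : T ≤ 1) (y : H) :
    ‖(1 - T) y‖ ^ 2 + ‖T y‖ ^ 2 ≤ ‖y‖ ^ 2 := by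
  have h0' := (ContinuousLinearMap.nonneg_iff_isPositive T).mp h0
  have hsa : IsSelfAdjoint T := h0'.isSelfAdjoint
  have hsq : T ^ 2 ≤ T := by
    simpa using CStarAlgebra.pow_antitone h0 h1 (show 1 ≤ 2 by norm_num)
  have hps := ((ContinuousLinearMap.le_def _ _).mp hsq).inner_nonneg_right y
  have hTTy : (inner ℂ y (T (T y)) : ℂ) = inner ℂ (T y) (T y) :=
    ((ContinuousLinearMap.isSelfAdjoint_iff_isSymmetric.mp hsa) y (T y)).symm
  have hkey : ‖T y‖ ^ 2 ≤ RCLike.re (inner ℂ y (T y) : ℂ) := by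
    have h3 : RCLike.re ((inner ℂ y ((T - T ^ 2) y)) : ℂ)
        = RCLike.re (inner ℂ y (T y) : ℂ) - ‖T y‖ ^ 2 := by
      rw [ContinuousLinearMap.sub_apply, inner_sub_right, map_sub]
      have h4 : ((T : H →L[ℂ] H) ^ 2) y = T (T y) := by
        rw [pow_two, ContinuousLinearMap.mul_apply]
      rw [h4, hTTy, ← inner_self_eq_norm_sq (𝕜 := ℂ)]
    replace hps := (RCLike.nonneg_iff.mp hps).1; rw [h3] at hps; linarith
  have hexp : ‖(1 - T) y‖ ^ 2 = ‖y‖ ^ 2 - 2 * RCLike.re (inner ℂ y (T y) : ℂ) + ‖T y‖ ^ 2 := by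
    have h5 : (1 - T) y = y - T y := by
      simp [ContinuousLinearMap.sub_apply]
    rw [h5, @norm_sub_sq ℂ]
  linarith

lemma aux_apply_norm_le (T : H →L[ℂ] H) (h0 : 0 ≤ T) (h1 : T ≤ 1) (y : H) :
    ‖(1 - T) y‖ ≤ ‖y‖ := by
  have h := aux_norm_sq_add_le T h0 h1 y
  nlinarith [norm_nonneg ((1 - T) y), norm_nonneg y, sq_nonneg (‖T y‖)]

end Aux

section Meas
variable {H : Type*} [NormedAddCommGroup H] [InnerProductSpace ℂ H]
  [TopologicalSpace.SeparableSpace H] [MeasurableSpace H] [BorelSpace H]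

omit [TopologicalSpace.SeparableSpace H] in
lemma aux_eval_measurable_strong (y : H) :
    @Measurable (H →L[ℂ] H) H (strongMS H) _ (fun T => T y) := by
  letI : MeasurableSpace (H →L[ℂ] H) := strongMS H
  rw [measurable_iff_comap_le]
  have : (‹MeasurableSpace H› : MeasurableSpace H) = borel H := BorelSpace.measurable_eq
  rw [this]
  exact le_iSup (fun x : H => (borel H).comap fun T : H →L[ℂ] H => T x) y

lemma aux_eval_measurable :
    @Measurable ((H →L[ℂ] H) × H) H
      (@Prod.instMeasurableSpace _ _ (strongMS H) _) _ (fun p => p.1 p.2) := by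
  letI : MeasurableSpace (H →L[ℂ] H) := strongMS H
  haveI : SecondCountableTopology H := UniformSpace.secondCountable_of_separable H
  have h := measurable_uncurry_of_continuous_of_measurable
    (ι := H) (α := H →L[ℂ] H) (β := H) (u := fun y T => T y)
    (fun T => T.continuous) (fun y => aux_eval_measurable_strong y)
  have h2 : (fun p : (H →L[ℂ] H) × H => p.1 p.2)
      = Function.uncurry (fun y (T : H →L[ℂ] H) => T y) ∘ Prod.swap := rfl
  rw [h2]
  exact h.comp measurable_swap

end Meas

/-- For an i.i.d. sequence `(Ψ_k)` of strongly measurable random positive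
contractions satisfying the coercivity condition with `0 < C < 1`, for every `x ∈ H` and `δ > 0`
the series of tail probabilities satisfies
`Σ_{n=0}^∞ ℙ(‖R_n x‖ > δ) ≤ ‖x‖² / (δ² C) < ∞`. -/
theorem tsum_prob_residual_gt_le
    {Ω : Type*} [MeasureSpace Ω] [IsProbabilityMeasure (ℙ : Measure Ω)]
    {H : Type*} [NormedAddCommGroup H] [InnerProductSpace ℂ H]
    [CompleteSpace H] [TopologicalSpace.SeparableSpace H]
    [MeasurableSpace H] [BorelSpace H]
    (Ψ : ℕ → Ω → (H →L[ℂ] H))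
    (hmeas : ∀ k, ∀ x : H, Measurable fun ω => Ψ k ω x)
    (hpos : ∀ k ω, 0 ≤ Ψ k ω) (hcontr : ∀ k ω, Ψ k ω ≤ 1)
    (hindep : iIndepFun (m := fun _ : ℕ => strongMS H) Ψ (ℙ : Measure Ω))
    (hident : ∀ i j : ℕ,
      @IdentDistrib Ω Ω (H →L[ℂ] H) _ _ (strongMS H) (Ψ i) (Ψ j) ℙ ℙ)
    (C : ℝ) (hC0 : 0 < C) (hC1 : C < 1)
    (hcoer : ∀ k, ∀ x : H, C * ‖x‖ ^ 2 ≤ ∫ ω : Ω, ‖Ψ k ω x‖ ^ 2 ∂(ℙ : Measure Ω))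
    (x : H) (δ : ℝ) (hδ : 0 < δ) :
    (∑' n : ℕ, (ℙ : Measure Ω) {ω | δ < ‖residualProd Ψ ω n x‖})
        ≤ ENNReal.ofReal (‖x‖ ^ 2 / (δ ^ 2 * C)) ∧
      (∑' n : ℕ, (ℙ : Measure Ω) {ω | δ < ‖residualProd Ψ ω n x‖}) < ⊤ := by
  classical
  letI : MeasurableSpace (H →L[ℂ] H) := strongMS H
  haveI : SecondCountableTopology H := UniformSpace.secondCountable_of_separable H
  set Y : ℕ → Ω → H := fun n ω => residualProd Ψ ω n x with hYdef
  -- measurability of Ψ into the strong σ-algebra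
  have hΨm : ∀ k, Measurable (Ψ k) := by
    intro k
    rw [measurable_iff_comap_le]
    show MeasurableSpace.comap (Ψ k) (⨆ z : H, (borel H).comap fun T => T z) ≤ _
    rw [MeasurableSpace.comap_iSup]
    refine iSup_le fun z => ?_
    rw [MeasurableSpace.comap_comp]
    have hb : borel H = ‹MeasurableSpace H› := BorelSpace.measurable_eq.symm
    rw [hb]
    exact (hmeas k z).comap_le
  -- σ-algebras generated by the first Ψ's
  set 𝔖 : ℕ → MeasurableSpace Ω :=
    fun n => ⨆ i ∈ Set.Iic n, MeasurableSpace.comap (Ψ i) (strongMS H) with h𝔖def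
  have hYS : ∀ n, @Measurable Ω H (𝔖 n) _ (Y n) := by
    intro n
    induction n with
    | zero =>
      have h0 : Y 0 = fun _ => x := by
        funext ω; simp [hYdef, residualProd, ContinuousLinearMap.one_apply]
      rw [h0]; exact measurable_const
    | succ n ih =>
      have hle : 𝔖 n ≤ 𝔖 (n + 1) := by
        refine iSup₂_le fun i hi => ?_
        exact le_iSup₂_of_le i (le_trans hi (Nat.le_succ n)) le_rfl
      have hYn : @Measurable Ω H (𝔖 (n + 1)) _ (Y n) := ih.mono hle le_rfl
      have hΨS : @Measurable Ω _ (𝔖 (n + 1)) (strongMS H) (Ψ (n + 1)) := by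
        rw [measurable_iff_comap_le]
        exact le_iSup₂_of_le (n + 1) (Set.mem_Iic.mpr le_rfl) le_rfl
      have hpair : @Measurable Ω _ (𝔖 (n + 1)) _ (fun ω => (Ψ (n + 1) ω, Y n ω)) :=
        hΨS.prodMk hYn
      have hform : Y (n + 1) = fun ω =>
          Y n ω - (fun p : (H →L[ℂ] H) × H => p.1 p.2) (Ψ (n + 1) ω, Y n ω) := by
        funext ω
        show ((1 - Ψ (n + 1) ω) * residualProd Ψ ω n) x = _
        simp [ContinuousLinearMap.mul_apply, ContinuousLinearMap.sub_apply, hYdef]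
      rw [hform]
      exact hYn.sub (aux_eval_measurable.comp hpair)
  have h𝔖le : ∀ n, 𝔖 n ≤ (inferInstance : MeasurableSpace Ω) :=
    fun n => iSup₂_le fun i _ => (hΨm i).comap_le
  have hYm : ∀ n, Measurable (Y n) := fun n => (hYS n).mono (h𝔖le n) le_rfl
  -- pointwise norm bound
  have hRle : ∀ n ω, ‖Y n ω‖ ≤ ‖x‖ := by
    intro n
    induction n with
    | zero => intro ω; simp [hYdef, residualProd, ContinuousLinearMap.one_apply]
    | succ n ih =>
      intro ω
      have hform : Y (n + 1) ω = (1 - Ψ (n + 1) ω) (Y n ω) := by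
        show ((1 - Ψ (n + 1) ω) * residualProd Ψ ω n) x = _
        rw [ContinuousLinearMap.mul_apply]
      rw [hform]
      exact le_trans (aux_apply_norm_le _ (hpos _ _) (hcontr _ _) _) (ih ω)
  -- the second moments
  set A : ℕ → ℝ≥0∞ := fun n => ∫⁻ ω, ENNReal.ofReal (‖Y n ω‖ ^ 2) with hAdef
  set X : ℝ≥0∞ := ENNReal.ofReal (‖x‖ ^ 2) with hXdef
  set c : ℝ≥0∞ := ENNReal.ofReal C with hcdef
  set d : ℝ≥0∞ := ENNReal.ofReal (δ ^ 2) with hddef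
  have hAm : ∀ n, Measurable fun ω => ENNReal.ofReal (‖Y n ω‖ ^ 2) :=
    fun n => ((hYm n).norm.pow_const 2).ennreal_ofReal
  have hA0 : A 0 = X := by
    have h0 : Y 0 = fun _ => x := by
      funext ω; simp [hYdef, residualProd, ContinuousLinearMap.one_apply]
    simp [hAdef, h0, lintegral_const, measure_univ, hXdef]
  have hAle : ∀ n, A n ≤ X := by
    intro n
    calc A n ≤ ∫⁻ _, X := lintegral_mono fun ω =>
          ENNReal.ofReal_le_ofReal (pow_le_pow_left₀ (norm_nonneg _) (hRle n ω) 2)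
      _ = X := by simp [lintegral_const, measure_univ]
  have hAtop : ∀ n, A n ≠ ⊤ := fun n => (lt_of_le_of_lt (hAle n) ENNReal.ofReal_lt_top).ne
  -- coercivity, lintegral form
  have hcoer' : ∀ k (y : H),
      ENNReal.ofReal (C * ‖y‖ ^ 2) ≤ ∫⁻ ω, ENNReal.ofReal (‖Ψ k ω y‖ ^ 2) := by
    intro k y
    rcases eq_or_ne (∫⁻ ω, ENNReal.ofReal (‖Ψ k ω y‖ ^ 2)) ⊤ with h | h
    · rw [h]; exact le_top
    · have hnn : 0 ≤ᵐ[(ℙ : Measure Ω)] fun ω => ‖Ψ k ω y‖ ^ 2 :=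
        Filter.Eventually.of_forall fun ω => by positivity
      have hsm : AEStronglyMeasurable (fun ω => ‖Ψ k ω y‖ ^ 2) ℙ :=
        ((hmeas k y).norm.pow_const 2).aestronglyMeasurable
      have heq := integral_eq_lintegral_of_nonneg_ae hnn hsm
      have h2 := hcoer k y
      rw [heq] at h2
      calc ENNReal.ofReal (C * ‖y‖ ^ 2)
          ≤ ENNReal.ofReal (∫⁻ ω, ENNReal.ofReal (‖Ψ k ω y‖ ^ 2)).toReal :=
            ENNReal.ofReal_le_ofReal h2
        _ = _ := ENNReal.ofReal_toReal h
  -- independence of Ψ (n+1) and Y n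
  have hiind : iIndep (fun i => MeasurableSpace.comap (Ψ i) (strongMS H)) ℙ :=
    (iIndepFun_iff_iIndep _ _ _).mp hindep
  have hindepn : ∀ n, IndepFun (Ψ (n + 1)) (Y n) ℙ := by
    intro n
    have hdisj : Disjoint ({n + 1} : Set ℕ) (Set.Iic n) := by
      simp [Set.disjoint_left]
    have h := indep_iSup_of_disjoint (fun i => (hΨm i).comap_le) hiind hdisj
    rw [IndepFun_iff_Indep]
    refine indep_of_indep_of_le_right (indep_of_indep_of_le_left h ?_) ?_
    · exact le_iSup₂_of_le (n + 1) rfl le_rfl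
    · exact measurable_iff_comap_le.mp (hYS n)
  -- the cross term
  have hL : ∀ n, c * A n ≤ ∫⁻ ω, ENNReal.ofReal (‖Ψ (n + 1) ω (Y n ω)‖ ^ 2) := by
    intro n
    haveI h1 : IsProbabilityMeasure ((ℙ : Measure Ω).map (Ψ (n + 1))) :=
      Measure.isProbabilityMeasure_map (hΨm _).aemeasurable
    haveI h2 : IsProbabilityMeasure ((ℙ : Measure Ω).map (Y n)) :=
      Measure.isProbabilityMeasure_map (hYm n).aemeasurable
    have hmapeq := (indepFun_iff_map_prod_eq_prod_map_map
      (hΨm (n + 1)).aemeasurable (hYm n).aemeasurable).mp (hindepn n)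
    have hgm : Measurable fun p : (H →L[ℂ] H) × H => ENNReal.ofReal (‖p.1 p.2‖ ^ 2) :=
      (aux_eval_measurable.norm.pow_const 2).ennreal_ofReal
    have e1 : (∫⁻ ω, ENNReal.ofReal (‖Ψ (n + 1) ω (Y n ω)‖ ^ 2))
        = ∫⁻ p : (H →L[ℂ] H) × H, ENNReal.ofReal (‖p.1 p.2‖ ^ 2)
            ∂(((ℙ : Measure Ω).map (Ψ (n + 1))).prod ((ℙ : Measure Ω).map (Y n))) := by
      rw [← hmapeq, lintegral_map hgm ((hΨm _).prodMk (hYm n))]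
    rw [e1, lintegral_prod_symm _ hgm.aemeasurable]
    have e2 : ∀ y : H, (∫⁻ T, ENNReal.ofReal (‖T y‖ ^ 2) ∂((ℙ : Measure Ω).map (Ψ (n + 1))))
        = ∫⁻ ω, ENNReal.ofReal (‖Ψ (n + 1) ω y‖ ^ 2) := fun y =>
      lintegral_map ((aux_eval_measurable_strong y).norm.pow_const 2).ennreal_ofReal (hΨm _)
    have e3 : (∫⁻ ω, ENNReal.ofReal (C * ‖Y n ω‖ ^ 2)) = c * A n := by
      simp_rw [ENNReal.ofReal_mul hC0.le]
      exact lintegral_const_mul _ (hAm n)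
    calc c * A n = ∫⁻ ω, ENNReal.ofReal (C * ‖Y n ω‖ ^ 2) := e3.symm
      _ = ∫⁻ y, ENNReal.ofReal (C * ‖y‖ ^ 2) ∂((ℙ : Measure Ω).map (Y n)) :=
        (lintegral_map (((measurable_norm.pow_const 2).const_mul C).ennreal_ofReal) (hYm n)).symm
      _ ≤ ∫⁻ y, ∫⁻ T, ENNReal.ofReal (‖T y‖ ^ 2) ∂((ℙ : Measure Ω).map (Ψ (n + 1)))
            ∂((ℙ : Measure Ω).map (Y n)) :=
        lintegral_mono fun y => le_trans (hcoer' (n + 1) y) (e2 y).ge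
  -- one-step contraction
  have hstep : ∀ n, A (n + 1) ≤ (1 - c) * A n := by
    intro n
    have hptwise : ∀ ω, ENNReal.ofReal (‖Y (n + 1) ω‖ ^ 2)
        + ENNReal.ofReal (‖Ψ (n + 1) ω (Y n ω)‖ ^ 2) ≤ ENNReal.ofReal (‖Y n ω‖ ^ 2) := by
      intro ω
      rw [← ENNReal.ofReal_add (by positivity) (by positivity)]
      apply ENNReal.ofReal_le_ofReal
      have hform : Y (n + 1) ω = (1 - Ψ (n + 1) ω) (Y n ω) := by
        show ((1 - Ψ (n + 1) ω) * residualProd Ψ ω n) x = _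
        rw [ContinuousLinearMap.mul_apply]
      rw [hform]
      exact aux_norm_sq_add_le _ (hpos _ _) (hcontr _ _) _
    have hsum : A (n + 1) + (∫⁻ ω, ENNReal.ofReal (‖Ψ (n + 1) ω (Y n ω)‖ ^ 2)) ≤ A n := by
      calc A (n + 1) + (∫⁻ ω, ENNReal.ofReal (‖Ψ (n + 1) ω (Y n ω)‖ ^ 2))
          = ∫⁻ ω, (ENNReal.ofReal (‖Y (n + 1) ω‖ ^ 2)
              + ENNReal.ofReal (‖Ψ (n + 1) ω (Y n ω)‖ ^ 2)) :=
            (lintegral_add_left (hAm (n + 1)) _).symm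
        _ ≤ A n := lintegral_mono hptwise
    have hLtop : (∫⁻ ω, ENNReal.ofReal (‖Ψ (n + 1) ω (Y n ω)‖ ^ 2)) ≠ ⊤ :=
      (lt_of_le_of_lt (le_trans le_add_self hsum)
        (lt_of_le_of_lt (hAle n) ENNReal.ofReal_lt_top)).ne
    have h1 : A (n + 1) ≤ A n - c * A n :=
      le_trans (ENNReal.le_sub_of_add_le_right hLtop hsum) (tsub_le_tsub_left (hL n) (A n))
    have h2 : (1 - c) * A n = A n - c * A n := by
      rw [ENNReal.sub_mul (fun _ _ => hAtop n), one_mul]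
    rw [h2]; exact h1
  -- geometric decay
  have hAn : ∀ n, A n ≤ (1 - c) ^ n * X := by
    intro n
    induction n with
    | zero => simpa using hA0.le
    | succ n ih =>
      calc A (n + 1) ≤ (1 - c) * A n := hstep n
        _ ≤ (1 - c) * ((1 - c) ^ n * X) := mul_le_mul_right ih _
        _ = (1 - c) ^ (n + 1) * X := by rw [pow_succ, mul_comm ((1 - c) ^ n) (1 - c), mul_assoc]
  -- Chebyshev
  have hd0 : d ≠ 0 := by
    simp [hddef, ENNReal.ofReal_eq_zero, not_le]
    positivity
  have hdtop : d ≠ ⊤ := ENNReal.ofReal_ne_top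
  have hcheb : ∀ n, (ℙ : Measure Ω) {ω | δ < ‖Y n ω‖} ≤ A n / d := by
    intro n
    have hsub : {ω | δ < ‖Y n ω‖} ⊆ {ω | d ≤ ENNReal.ofReal (‖Y n ω‖ ^ 2)} := by
      intro ω hω
      exact ENNReal.ofReal_le_ofReal (by nlinarith [Set.mem_setOf_eq ▸ hω, hδ])
    have h := mul_meas_ge_le_lintegral₀ (μ := (ℙ : Measure Ω)) (hAm n).aemeasurable d
    have h2 : (ℙ : Measure Ω) {ω | δ < ‖Y n ω‖} * d ≤ A n := by
      rw [mul_comm]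
      exact le_trans (mul_le_mul_right (measure_mono hsub) d) h
    exact (ENNReal.le_div_iff_mul_le (Or.inl hd0) (Or.inl hdtop)).mpr h2
  -- summation
  have hc1 : c ≤ 1 := by
    rw [hcdef, ← ENNReal.ofReal_one]
    exact ENNReal.ofReal_le_ofReal hC1.le
  have hgeom : (∑' n : ℕ, (1 - c) ^ n) = c⁻¹ := by
    rw [ENNReal.tsum_geometric, ENNReal.sub_sub_cancel ENNReal.one_ne_top hc1]
  have hbound : (∑' n : ℕ, (ℙ : Measure Ω) {ω | δ < ‖residualProd Ψ ω n x‖})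
      ≤ c⁻¹ * (X / d) := by
    calc (∑' n : ℕ, (ℙ : Measure Ω) {ω | δ < ‖residualProd Ψ ω n x‖})
        ≤ ∑' n : ℕ, (1 - c) ^ n * (X / d) := by
          refine ENNReal.tsum_le_tsum fun n => ?_
          calc (ℙ : Measure Ω) {ω | δ < ‖residualProd Ψ ω n x‖} ≤ A n / d := hcheb n
            _ ≤ ((1 - c) ^ n * X) / d := ENNReal.div_le_div_right (hAn n) d
            _ = (1 - c) ^ n * (X / d) := by rw [mul_div_assoc]
      _ = (∑' n : ℕ, (1 - c) ^ n) * (X / d) := ENNReal.tsum_mul_right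
      _ = c⁻¹ * (X / d) := by rw [hgeom]
  have hreal : ‖x‖ ^ 2 / (δ ^ 2 * C) = C⁻¹ * (‖x‖ ^ 2 * (δ ^ 2)⁻¹) := by
    rw [div_eq_mul_inv, mul_inv]; ring
  have hfinal : c⁻¹ * (X / d) = ENNReal.ofReal (‖x‖ ^ 2 / (δ ^ 2 * C)) := by
    rw [hreal, ENNReal.ofReal_mul (by positivity : (0:ℝ) ≤ C⁻¹),
      ENNReal.ofReal_mul (by positivity : (0:ℝ) ≤ ‖x‖ ^ 2),
      ENNReal.ofReal_inv_of_pos hC0,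
      ENNReal.ofReal_inv_of_pos (by positivity : (0:ℝ) < δ ^ 2),
      hcdef, hXdef, hddef, div_eq_mul_inv]
  rw [hfinal] at hbound
  exact ⟨hbound, lt_of_le_of_lt hbound ENNReal.ofReal_lt_top⟩
end

section
/- Let H be a separable complex Hilbert space and {(W_i, v_i)}_{i∈ℕ} a fusion frame for H with lower bound A > 0, i.e. A‖x‖² ≤ Σ_i v_i² ‖P_{W_i} x‖² ≤ B‖x‖² for all x ∈ H, where P_{W_i} is the orthogonal projection onto the closed subspace W_i. Assume Σ_i v_i² = 1, and let (Ψ_k)_{k∈ℕ} be an i.i.d. sequence of random operators with ℙ(Ψ_k = P_{W_i}) = v_i² for each i. Set T_k = Ψ_k (I − Ψ_{k−1})⋯(I − Ψ₁). Then for every x ∈ H, lim_{n→∞} 𝔼[ Σ_{k=1}^{n} ‖T_k x‖² ] = ‖x‖²; that is, {T_k}_{k∈ℕ} is a random operator-valued Parseval frame for H. -/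
open MeasureTheory ProbabilityTheory Filter

/-- The orthogonal projection onto a closed subspace `W`, viewed as an operator `H → H`. -/
noncomputable def projL {H : Type*} [NormedAddCommGroup H] [InnerProductSpace ℂ H]
    (W : Submodule ℂ H) [CompleteSpace W] : H →L[ℂ] H :=
  W.subtypeL ∘L W.orthogonalProjectionOnto

section Aux

variable {H : Type*} [NormedAddCommGroup H] [InnerProductSpace ℂ H]

lemma projL_pythagoras (W : Submodule ℂ H) [CompleteSpace W] (z : H) :
    ‖projL W z‖ ^ 2 + ‖z - projL W z‖ ^ 2 = ‖z‖ ^ 2 := by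
  have h1 : (projL W z : H) ∈ W := (W.orthogonalProjectionOnto z).2
  have h2 : z - projL W z ∈ Wᗮ := Submodule.sub_starProjection_mem_orthogonal (K := W) z
  have hinner : (inner ℂ (projL W z) (z - projL W z) : ℂ) = 0 :=
    (Submodule.mem_orthogonal W _).mp h2 _ h1
  have h := norm_add_sq_eq_norm_sq_add_norm_sq_of_inner_eq_zero _ _ hinner
  rw [add_sub_cancel] at h
  linarith

lemma norm_sub_projL_le (W : Submodule ℂ H) [CompleteSpace W] (z : H) :
    ‖z - projL W z‖ ≤ ‖z‖ := by
  nlinarith [projL_pythagoras W z, norm_nonneg (z - projL W z), norm_nonneg z,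
    norm_nonneg (projL W z)]

lemma residualProd_succ_apply {Ω : Type*} (Ψ : ℕ → Ω → (H →L[ℂ] H)) (ω : Ω) (n : ℕ) (x : H) :
    residualProd Ψ ω (n + 1) x
      = residualProd Ψ ω n x - Ψ (n + 1) ω (residualProd Ψ ω n x) := by
  show ((1 - Ψ (n + 1) ω) * residualProd Ψ ω n) x = _
  rw [ContinuousLinearMap.mul_apply, ContinuousLinearMap.sub_apply, ContinuousLinearMap.one_apply]

/-- Possible values of `residualProd Ψ ω n x`. -/
def residVals {H : Type*} [NormedAddCommGroup H] [InnerProductSpace ℂ H]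
    (W : ℕ → Submodule ℂ H) [∀ i, CompleteSpace (W i)] (x : H) : ℕ → Set H
  | 0 => {x}
  | n + 1 => ⋃ i : ℕ, (fun z => z - projL (W i) z) '' residVals W x n

lemma residVals_countable (W : ℕ → Submodule ℂ H) [∀ i, CompleteSpace (W i)] (x : H) :
    ∀ n, (residVals W x n).Countable
  | 0 => Set.countable_singleton x
  | n + 1 => Set.countable_iUnion fun i => (residVals_countable W x n).image _

lemma residualProd_mem {Ω : Type*} (W : ℕ → Submodule ℂ H) [∀ i, CompleteSpace (W i)]
    (Ψ : ℕ → Ω → (H →L[ℂ] H)) (hvalues : ∀ k ω, ∃ i, Ψ k ω = projL (W i)) (ω : Ω) (x : H) :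
    ∀ n, residualProd Ψ ω n x ∈ residVals W x n
  | 0 => by simp [residualProd, residVals]
  | n + 1 => by
    obtain ⟨i, hi⟩ := hvalues (n + 1) ω
    refine Set.mem_iUnion.2 ⟨i, ⟨residualProd Ψ ω n x, residualProd_mem W Ψ hvalues ω x n, ?_⟩⟩
    rw [residualProd_succ_apply, hi]

lemma measurable_apply_countable {Ω : Type*} [MeasurableSpace H] [MeasurableSingletonClass H]
    {m1 m2 : MeasurableSpace Ω} {g : Ω → H} {C : Set H} (hC : C.Countable)
    (hg : ∀ ω, g ω ∈ C) (hgm : Measurable[m1] g)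
    {Φ : Ω → H →L[ℂ] H} (hΦ : ∀ y : H, Measurable[m2] fun ω => Φ ω y) :
    Measurable[m1 ⊔ m2] fun ω => Φ ω (g ω) := by
  intro s hs
  have heq : (fun ω => Φ ω (g ω)) ⁻¹' s
      = ⋃ y ∈ C, (g ⁻¹' {y} ∩ (fun ω => Φ ω y) ⁻¹' s) := by
    ext ω
    simp only [Set.mem_preimage, Set.mem_iUnion, Set.mem_inter_iff, Set.mem_singleton_iff]
    constructor
    · intro h; exact ⟨g ω, hg ω, rfl, h⟩
    · rintro ⟨y, _, rfl, h⟩; exact h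
  rw [heq]
  exact MeasurableSet.biUnion hC fun y _ =>
    ((hgm.mono le_sup_left le_rfl) (measurableSet_singleton y)).inter
      ((hΦ y).mono le_sup_right le_rfl hs)

end Aux

/-- Let `{(W_i, v_i)}` be a fusion frame for `H` with `Σ_i v_i² = 1`, and let
`(Ψ_k)` be an i.i.d. sequence of random operators with `ℙ(Ψ_k = P_{W_i}) = v_i²`. With
`T_k = Ψ_k (I - Ψ_{k-1})⋯(I - Ψ₁)`, for every `x ∈ H`,
`lim_n 𝔼[Σ_{k=1}^n ‖T_k x‖²] = ‖x‖²`: the family `{T_k}` is a random operator-valued Parseval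
frame for `H`. -/
theorem fusion_frame_random_parseval_frame
    {Ω : Type*} [MeasureSpace Ω] [IsProbabilityMeasure (ℙ : Measure Ω)]
    {H : Type*} [NormedAddCommGroup H] [InnerProductSpace ℂ H]
    [CompleteSpace H] [TopologicalSpace.SeparableSpace H]
    [MeasurableSpace H] [BorelSpace H]
    (W : ℕ → Submodule ℂ H) [∀ i, CompleteSpace (W i)]
    (v : ℕ → ℝ) (hv : ∀ i, 0 < v i)
    (A B : ℝ) (hA : 0 < A) (hB : 0 < B)
    (hsummable : ∀ x : H, Summable fun i => v i ^ 2 * ‖projL (W i) x‖ ^ 2)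
    (hlow : ∀ x : H, A * ‖x‖ ^ 2 ≤ ∑' i, v i ^ 2 * ‖projL (W i) x‖ ^ 2)
    (hup : ∀ x : H, ∑' i, v i ^ 2 * ‖projL (W i) x‖ ^ 2 ≤ B * ‖x‖ ^ 2)
    (hprob : ∑' i, v i ^ 2 = 1)
    (Ψ : ℕ → Ω → (H →L[ℂ] H))
    (hmeas : ∀ k, ∀ x : H, Measurable fun ω => Ψ k ω x)
    (hvalues : ∀ k ω, ∃ i, Ψ k ω = projL (W i))
    (hdist : ∀ k i, (ℙ : Measure Ω) {ω | Ψ k ω = projL (W i)} = ENNReal.ofReal (v i ^ 2))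
    (hindep : iIndepFun (m := fun _ : ℕ => strongMS H) Ψ (ℙ : Measure Ω))
    (hident : ∀ i j : ℕ,
      @IdentDistrib Ω Ω (H →L[ℂ] H) _ _ (strongMS H) (Ψ i) (Ψ j) ℙ ℙ)
    (x : H) :
    Tendsto
      (fun n => ∫ ω : Ω,
        (∑ k ∈ Finset.Icc 1 n, ‖Ψ k ω (residualProd Ψ ω (k - 1) x)‖ ^ 2) ∂(ℙ : Measure Ω))
      atTop (nhds (‖x‖ ^ 2)) := by
  classical
  set A' : ℝ := min A 1 with hA'def
  have hA'pos : 0 < A' := lt_min hA one_pos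
  have hA'le : A' ≤ 1 := min_le_right _ _
  set r : ℝ := 1 - A' with hrdef
  have hr0 : 0 ≤ r := by simp only [hrdef]; linarith
  have hr1 : r < 1 := by simp only [hrdef]; linarith
  have hvsummable : Summable fun i => v i ^ 2 := by
    by_contra h
    rw [tsum_eq_zero_of_not_summable h] at hprob
    exact one_ne_zero hprob.symm
  have hlow' : ∀ y : H, A' * ‖y‖ ^ 2 ≤ ∑' i, v i ^ 2 * ‖projL (W i) y‖ ^ 2 := fun y =>
    le_trans (mul_le_mul_of_nonneg_right (min_le_left A 1) (by positivity)) (hlow y)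
  have hpy : ∀ (i : ℕ) (y : H), ‖y - projL (W i) y‖ ^ 2 = ‖y‖ ^ 2 - ‖projL (W i) y‖ ^ 2 := by
    intro i y
    have := projL_pythagoras (W i) y
    linarith
  have hsummy : ∀ y : H, Summable fun i => v i ^ 2 * ‖y - projL (W i) y‖ ^ 2 := by
    intro y
    have h1 : Summable fun i => v i ^ 2 * ‖y‖ ^ 2 := hvsummable.mul_right _
    have heq : (fun i => v i ^ 2 * ‖y - projL (W i) y‖ ^ 2)
        = fun i => v i ^ 2 * ‖y‖ ^ 2 - v i ^ 2 * ‖projL (W i) y‖ ^ 2 :=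
      funext fun i => by rw [hpy i y]; ring
    rw [heq]
    exact h1.sub (hsummable y)
  have htsum_le : ∀ y : H, (∑' i, v i ^ 2 * ‖y - projL (W i) y‖ ^ 2) ≤ r * ‖y‖ ^ 2 := by
    intro y
    have h1 : Summable fun i => v i ^ 2 * ‖y‖ ^ 2 := hvsummable.mul_right _
    have heq : (∑' i, v i ^ 2 * ‖y - projL (W i) y‖ ^ 2)
        = (∑' i, v i ^ 2) * ‖y‖ ^ 2 - ∑' i, v i ^ 2 * ‖projL (W i) y‖ ^ 2 := by
      rw [← tsum_mul_right]
      rw [show (fun i => v i ^ 2 * ‖y - projL (W i) y‖ ^ 2)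
          = fun i => v i ^ 2 * ‖y‖ ^ 2 - v i ^ 2 * ‖projL (W i) y‖ ^ 2 from
        funext fun i => by rw [hpy i y]; ring]
      exact Summable.tsum_sub h1 (hsummable y)
    rw [heq, hprob, one_mul]
    have := hlow' y
    simp only [hrdef]
    nlinarith
  -- the σ-algebras
  let mΩ : MeasurableSpace Ω := inferInstance
  let 𝔪 : ℕ → MeasurableSpace Ω := fun k => MeasurableSpace.comap (Ψ k) (strongMS H)
  have hborel : ‹MeasurableSpace H› = borel H := BorelSpace.measurable_eq
  have h𝔪le : ∀ k, 𝔪 k ≤ mΩ := by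
    intro k
    show MeasurableSpace.comap (Ψ k) (strongMS H) ≤ mΩ
    rw [strongMS, MeasurableSpace.comap_iSup]
    refine iSup_le fun z => ?_
    rw [MeasurableSpace.comap_comp]
    refine measurable_iff_comap_le.mp ?_
    exact (hmeas k z).mono le_rfl (le_of_eq hborel.symm)
  have hEval : ∀ y : H, Measurable[strongMS H] fun T : H →L[ℂ] H => T y := by
    intro y
    refine measurable_iff_comap_le.mpr ?_
    rw [hborel]
    exact le_iSup (fun z : H => (borel H).comap fun T : H →L[ℂ] H => T z) y
  have hΨy : ∀ k (y : H), Measurable[𝔪 k] fun ω => Ψ k ω y := fun k y =>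
    (hEval y).comp (measurable_iff_comap_le.mpr le_rfl)
  -- singletons are measurable in the strong σ-algebra
  obtain ⟨D, hDc, hDd⟩ := TopologicalSpace.exists_countable_dense H
  have hsing : ∀ Q : H →L[ℂ] H, MeasurableSet[strongMS H] {Q} := by
    intro Q
    have heq : ({Q} : Set (H →L[ℂ] H)) = ⋂ z ∈ D, (fun T : H →L[ℂ] H => T z) ⁻¹' {Q z} := by
      ext T
      simp only [Set.mem_singleton_iff, Set.mem_iInter, Set.mem_preimage]
      constructor
      · rintro rfl z _; rfl
      · intro h
        have : (T : H → H) = Q := Continuous.ext_on hDd T.continuous Q.continuous h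
        exact ContinuousLinearMap.ext fun z => congrFun this z
    rw [heq]
    refine MeasurableSet.biInter hDc fun z _ => ?_
    have hz : MeasurableSet[(borel H).comap fun T : H →L[ℂ] H => T z]
        ((fun T : H →L[ℂ] H => T z) ⁻¹' {Q z}) := by
      refine ⟨{Q z}, ?_, rfl⟩
      rw [← hborel]
      exact measurableSet_singleton _
    exact le_iSup (fun z : H => (borel H).comap fun T : H →L[ℂ] H => T z) z _ hz
  -- the events on which Ψ k equals a given projection
  let S : ℕ → ℕ → Set Ω := fun k i => Ψ k ⁻¹' {projL (W i)}
  have hSmem : ∀ k i, MeasurableSet[𝔪 k] (S k i) := fun k i => ⟨{projL (W i)}, hsing _, rfl⟩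
  have hSmeas : ∀ k i, MeasurableSet (S k i) := fun k i => h𝔪le k _ (hSmem k i)
  have hScov : ∀ k, (⋃ i, S k i) = Set.univ := by
    intro k
    apply Set.eq_univ_of_forall
    intro ω
    obtain ⟨i, hi⟩ := hvalues k ω
    exact Set.mem_iUnion.2 ⟨i, hi⟩
  have hSmeasure : ∀ k i, (ℙ : Measure Ω) (S k i) = ENNReal.ofReal (v i ^ 2) := fun k i =>
    hdist k i
  -- past σ-algebras
  let M : ℕ → MeasurableSpace Ω := fun n => ⨆ k ∈ Set.Icc 1 n, 𝔪 k
  have hMle : ∀ n, M n ≤ mΩ := fun n => iSup₂_le fun k _ => h𝔪le k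
  have hMmono : ∀ {a b : ℕ}, a ≤ b → M a ≤ M b := by
    intro a b hab
    exact biSup_mono (Set.Icc_subset_Icc_right hab)
  -- independence
  have hii : iIndep 𝔪 (ℙ : Measure Ω) := hindep
  have hInd : ∀ n, Indep (M n) (𝔪 (n + 1)) (ℙ : Measure Ω) := by
    intro n
    have hd : Disjoint (Set.Icc 1 n) ({n + 1} : Set ℕ) := by
      simp only [Set.disjoint_singleton_right, Set.mem_Icc, not_and]
      omega
    have h := indep_iSup_of_disjoint h𝔪le hii hd
    simpa only [iSup_singleton] using h
  have hmul : ∀ n (E : Set Ω), MeasurableSet[M n] E → ∀ s : Set Ω, MeasurableSet[𝔪 (n + 1)] s →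
      (ℙ : Measure Ω) (E ∩ s) = ℙ E * ℙ s := by
    intro n E hE s hs
    exact (Indep_iff _ _ _).mp (hInd n) E s hE hs
  have hprod : ∀ n (E : Set Ω), MeasurableSet[M n] E → ∀ i,
      (ℙ : Measure Ω) (E ∩ S (n + 1) i) = ℙ E * ENNReal.ofReal (v i ^ 2) := by
    intro n E hE i
    rw [hmul n E hE _ (hSmem (n + 1) i), hSmeasure (n + 1) i]
  -- measurability of the residual products
  have hRval : ∀ (ω : Ω) n, residualProd Ψ ω n x ∈ residVals W x n := fun ω n =>
    residualProd_mem W Ψ hvalues ω x n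
  have hRmeas : ∀ n, Measurable[M n] fun ω => residualProd Ψ ω n x := by
    intro n
    induction n with
    | zero =>
      have : (fun ω : Ω => residualProd Ψ ω 0 x) = fun _ => x := rfl
      rw [this]; exact measurable_const
    | succ n ih =>
      have hg : Measurable[M (n + 1)] fun ω => residualProd Ψ ω n x :=
        ih.mono (hMmono (Nat.le_succ n)) le_rfl
      have hΦ : ∀ y : H, Measurable[M (n + 1)] fun ω => Ψ (n + 1) ω y := by
        intro y
        refine (hΨy (n + 1) y).mono ?_ le_rfl
        exact le_biSup 𝔪 (by simp : (n + 1) ∈ Set.Icc 1 (n + 1))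
      have happ : Measurable[M (n + 1)] fun ω => Ψ (n + 1) ω (residualProd Ψ ω n x) := by
        have h := measurable_apply_countable (residVals_countable W x n)
          (fun ω => hRval ω n) hg hΦ
        exact h.mono (sup_le le_rfl le_rfl) le_rfl
      have heq : (fun ω => residualProd Ψ ω (n + 1) x)
          = fun ω => residualProd Ψ ω n x - Ψ (n + 1) ω (residualProd Ψ ω n x) :=
        funext fun ω => residualProd_succ_apply Ψ ω n x
      rw [heq]
      exact hg.sub happ
  -- the key one-step estimate, conditioned on a past event
  have hL3 : ∀ n (y : H) (E : Set Ω), MeasurableSet[M n] E →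
      ∫⁻ ω in E, ENNReal.ofReal (‖y - Ψ (n + 1) ω y‖ ^ 2) ∂(ℙ : Measure Ω)
        ≤ ℙ E * ENNReal.ofReal (r * ‖y‖ ^ 2) := by
    intro n y E hE
    have hEm : MeasurableSet E := hMle n E hE
    set Dj : ℕ → Set Ω := disjointed (S (n + 1)) with hDjdef
    have hDm : ∀ i, MeasurableSet (Dj i) := MeasurableSet.disjointed (hSmeas (n + 1))
    have hDdisj : Pairwise (Function.onFun Disjoint Dj) := disjoint_disjointed _
    have hDcov : (⋃ i, Dj i) = Set.univ := by
      rw [hDjdef, iUnion_disjointed, hScov]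
    have hsum_p : (∑' i, ENNReal.ofReal (v i ^ 2)) = 1 := by
      rw [← ENNReal.ofReal_tsum_of_nonneg (fun i => sq_nonneg _) hvsummable, hprob,
        ENNReal.ofReal_one]
    have hbc : ∀ i, (ℙ : Measure Ω) (E ∩ Dj i) ≤ ℙ (E ∩ S (n + 1) i) := fun i =>
      measure_mono (Set.inter_subset_inter_right _ (disjointed_subset _ _))
    have hsum_b : (∑' i, (ℙ : Measure Ω) (E ∩ Dj i)) = ℙ E := by
      rw [← measure_iUnion (fun i j hij => (hDdisj hij).mono
          Set.inter_subset_right Set.inter_subset_right)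
          (fun i => hEm.inter (hDm i)),
        ← Set.inter_iUnion, hDcov, Set.inter_univ]
    have hsum_c : (∑' i, (ℙ : Measure Ω) (E ∩ S (n + 1) i)) = ℙ E := by
      have : ∀ i, (ℙ : Measure Ω) (E ∩ S (n + 1) i) = ℙ E * ENNReal.ofReal (v i ^ 2) :=
        hprod n E hE
      simp_rw [this]
      rw [ENNReal.tsum_mul_left, hsum_p, mul_one]
    have hDE : ∀ i, (ℙ : Measure Ω) (E ∩ Dj i) = ℙ E * ENNReal.ofReal (v i ^ 2) := by
      intro i
      have heq : (ℙ : Measure Ω) (E ∩ Dj i) = ℙ (E ∩ S (n + 1) i) := by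
        by_contra hne
        have hlt : (ℙ : Measure Ω) (E ∩ Dj i) < ℙ (E ∩ S (n + 1) i) := (hbc i).lt_of_ne hne
        have h := ENNReal.tsum_lt_tsum (i := i)
          (by rw [hsum_b]; exact measure_ne_top _ _) hbc hlt
        rw [hsum_b, hsum_c] at h
        exact lt_irrefl _ h
      rw [heq, hprod n E hE i]
    -- decompose the integral
    have hdecomp : ∫⁻ ω in E, ENNReal.ofReal (‖y - Ψ (n + 1) ω y‖ ^ 2) ∂(ℙ : Measure Ω)
        = ∑' i, ∫⁻ ω in E ∩ Dj i, ENNReal.ofReal (‖y - Ψ (n + 1) ω y‖ ^ 2) ∂(ℙ : Measure Ω) := by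
      have hEeq : E = ⋃ i, (E ∩ Dj i) := by
        rw [← Set.inter_iUnion, hDcov, Set.inter_univ]
      conv_lhs => rw [hEeq]
      exact lintegral_iUnion (fun i => hEm.inter (hDm i))
        (fun i j hij => (hDdisj hij).mono Set.inter_subset_right Set.inter_subset_right) _
    have hpiece : ∀ i, ∫⁻ ω in E ∩ Dj i, ENNReal.ofReal (‖y - Ψ (n + 1) ω y‖ ^ 2) ∂(ℙ : Measure Ω)
        = (ℙ : Measure Ω) (E ∩ Dj i) * ENNReal.ofReal (‖y - projL (W i) y‖ ^ 2) := by
      intro i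
      rw [setLIntegral_congr_fun (hEm.inter (hDm i))
        (fun ω hω => ?_), setLIntegral_const, mul_comm]
      have hωS : ω ∈ S (n + 1) i := disjointed_subset _ _ hω.2
      have : Ψ (n + 1) ω = projL (W i) := hωS
      rw [this]
    rw [hdecomp]
    calc (∑' i, ∫⁻ ω in E ∩ Dj i, ENNReal.ofReal (‖y - Ψ (n + 1) ω y‖ ^ 2) ∂(ℙ : Measure Ω))
        = ∑' i, (ℙ : Measure Ω) E * ENNReal.ofReal (v i ^ 2 * ‖y - projL (W i) y‖ ^ 2) := by
          refine tsum_congr fun i => ?_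
          rw [hpiece i, hDE i, ENNReal.ofReal_mul (sq_nonneg _), mul_assoc]
      _ = (ℙ : Measure Ω) E * ENNReal.ofReal (∑' i, v i ^ 2 * ‖y - projL (W i) y‖ ^ 2) := by
          rw [ENNReal.ofReal_tsum_of_nonneg (fun i => by positivity) (hsummy y),
            ENNReal.tsum_mul_left]
      _ ≤ (ℙ : Measure Ω) E * ENNReal.ofReal (r * ‖y‖ ^ 2) := by
          exact mul_le_mul_right (ENNReal.ofReal_le_ofReal (htsum_le y)) _
  -- one-step contraction of the lintegral
  have hstep : ∀ n, ∫⁻ ω, ENNReal.ofReal (‖residualProd Ψ ω (n + 1) x‖ ^ 2) ∂(ℙ : Measure Ω)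
      ≤ ENNReal.ofReal r * ∫⁻ ω, ENNReal.ofReal (‖residualProd Ψ ω n x‖ ^ 2) ∂(ℙ : Measure Ω) := by
    intro n
    haveI : Countable ↥(residVals W x n) := (residVals_countable W x n).to_subtype
    set E : ↥(residVals W x n) → Set Ω :=
      fun y => (fun ω => residualProd Ψ ω n x) ⁻¹' {(y : H)} with hEdef
    have hEM : ∀ y, MeasurableSet[M n] (E y) := fun y => hRmeas n (measurableSet_singleton _)
    have hEmeas : ∀ y, MeasurableSet (E y) := fun y => hMle n _ (hEM y)
    have hEdisj : Pairwise (Function.onFun Disjoint E) := by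
      intro y y' hne
      simp only [Function.onFun, Set.disjoint_left]
      intro ω h1 h2
      exact hne (Subtype.ext ((show residualProd Ψ ω n x = (y : H) from h1).symm.trans h2))
    have hEcov : (⋃ y, E y) = Set.univ :=
      Set.eq_univ_of_forall fun ω => Set.mem_iUnion.2 ⟨⟨_, hRval ω n⟩, rfl⟩
    have hL : ∫⁻ ω, ENNReal.ofReal (‖residualProd Ψ ω (n + 1) x‖ ^ 2) ∂(ℙ : Measure Ω)
        = ∑' y : ↥(residVals W x n),
            ∫⁻ ω in E y, ENNReal.ofReal (‖(y : H) - Ψ (n + 1) ω (y : H)‖ ^ 2) ∂(ℙ : Measure Ω) := by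
      rw [← setLIntegral_univ, ← hEcov, lintegral_iUnion hEmeas hEdisj]
      refine tsum_congr fun y => setLIntegral_congr_fun (hEmeas y) (fun ω hω => ?_)
      have hω' : residualProd Ψ ω n x = (y : H) := hω
      rw [residualProd_succ_apply, hω']
    have hR : ∫⁻ ω, ENNReal.ofReal (‖residualProd Ψ ω n x‖ ^ 2) ∂(ℙ : Measure Ω)
        = ∑' y : ↥(residVals W x n), (ℙ : Measure Ω) (E y) * ENNReal.ofReal (‖(y : H)‖ ^ 2) := by
      rw [← setLIntegral_univ, ← hEcov, lintegral_iUnion hEmeas hEdisj]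
      refine tsum_congr fun y => ?_
      rw [setLIntegral_congr_fun (hEmeas y) (fun ω hω => by
        rw [show residualProd Ψ ω n x = (y : H) from hω]), setLIntegral_const, mul_comm]
    rw [hL, hR, ← ENNReal.tsum_mul_left]
    refine ENNReal.tsum_le_tsum fun y => ?_
    refine (hL3 n (y : H) (E y) (hEM y)).trans (le_of_eq ?_)
    rw [ENNReal.ofReal_mul hr0]
    ring
  -- iterated bound
  have hIbound : ∀ n, ∫⁻ ω, ENNReal.ofReal (‖residualProd Ψ ω n x‖ ^ 2) ∂(ℙ : Measure Ω)
      ≤ ENNReal.ofReal (r ^ n * ‖x‖ ^ 2) := by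
    intro n
    induction n with
    | zero =>
      have hconst : (fun ω : Ω => ENNReal.ofReal (‖residualProd Ψ ω 0 x‖ ^ 2))
          = fun _ => ENNReal.ofReal (‖x‖ ^ 2) := rfl
      rw [hconst, lintegral_const, measure_univ, mul_one, pow_zero, one_mul]
    | succ n ih =>
      refine (hstep n).trans ?_
      calc ENNReal.ofReal r * ∫⁻ ω, ENNReal.ofReal (‖residualProd Ψ ω n x‖ ^ 2) ∂(ℙ : Measure Ω)
          ≤ ENNReal.ofReal r * ENNReal.ofReal (r ^ n * ‖x‖ ^ 2) := mul_le_mul_right ih _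
        _ = ENNReal.ofReal (r ^ (n + 1) * ‖x‖ ^ 2) := by
            rw [← ENNReal.ofReal_mul hr0]
            ring_nf
  -- pointwise telescoping identity
  have htel : ∀ (ω : Ω) (n : ℕ),
      (∑ k ∈ Finset.Icc 1 n, ‖Ψ k ω (residualProd Ψ ω (k - 1) x)‖ ^ 2)
        = ‖x‖ ^ 2 - ‖residualProd Ψ ω n x‖ ^ 2 := by
    intro ω n
    induction n with
    | zero => simp [residualProd]
    | succ n ih =>
      rw [Finset.sum_Icc_succ_top (by omega : 1 ≤ n + 1), ih]
      have hk : n + 1 - 1 = n := rfl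
      rw [hk]
      obtain ⟨i, hi⟩ := hvalues (n + 1) ω
      have hpyth := projL_pythagoras (W i) (residualProd Ψ ω n x)
      rw [residualProd_succ_apply, hi]
      linarith
  -- contraction bound pointwise
  have hRcontr : ∀ (ω : Ω) (n : ℕ), ‖residualProd Ψ ω n x‖ ≤ ‖x‖ := by
    intro ω n
    induction n with
    | zero => exact le_of_eq rfl
    | succ n ih =>
      rw [residualProd_succ_apply]
      obtain ⟨i, hi⟩ := hvalues (n + 1) ω
      rw [hi]
      exact (norm_sub_projL_le (W i) _).trans ih
  have hRmeas' : ∀ n, Measurable fun ω => ‖residualProd Ψ ω n x‖ ^ 2 := by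
    intro n
    have hm : Measurable fun ω => residualProd Ψ ω n x := (hRmeas n).mono (hMle n) le_rfl
    exact (continuous_norm.measurable.comp hm).pow_const 2
  have hint : ∀ n, Integrable (fun ω => ‖residualProd Ψ ω n x‖ ^ 2) (ℙ : Measure Ω) := by
    intro n
    refine (integrable_const (‖x‖ ^ 2)).mono' (hRmeas' n).aestronglyMeasurable
      (ae_of_all _ fun ω => ?_)
    rw [Real.norm_eq_abs, abs_of_nonneg (by positivity)]
    nlinarith [hRcontr ω n, norm_nonneg (residualProd Ψ ω n x), norm_nonneg x]
  have hIeq : ∀ n, (∫ ω, (∑ k ∈ Finset.Icc 1 n,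
        ‖Ψ k ω (residualProd Ψ ω (k - 1) x)‖ ^ 2) ∂(ℙ : Measure Ω))
      = ‖x‖ ^ 2 - ∫ ω, ‖residualProd Ψ ω n x‖ ^ 2 ∂(ℙ : Measure Ω) := by
    intro n
    have heq : (fun ω => ∑ k ∈ Finset.Icc 1 n, ‖Ψ k ω (residualProd Ψ ω (k - 1) x)‖ ^ 2)
        = fun ω => ‖x‖ ^ 2 - ‖residualProd Ψ ω n x‖ ^ 2 := funext fun ω => htel ω n
    rw [heq, integral_sub (integrable_const _) (hint n), integral_const]
    simp
  have hIlin : ∀ n, ∫ ω, ‖residualProd Ψ ω n x‖ ^ 2 ∂(ℙ : Measure Ω)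
      = (∫⁻ ω, ENNReal.ofReal (‖residualProd Ψ ω n x‖ ^ 2) ∂(ℙ : Measure Ω)).toReal := fun n =>
    integral_eq_lintegral_of_nonneg_ae (ae_of_all _ fun ω => by positivity)
      (hRmeas' n).aestronglyMeasurable
  have hIto0 : Tendsto (fun n => ∫ ω, ‖residualProd Ψ ω n x‖ ^ 2 ∂(ℙ : Measure Ω))
      atTop (nhds 0) := by
    have hub : ∀ n, ∫ ω, ‖residualProd Ψ ω n x‖ ^ 2 ∂(ℙ : Measure Ω) ≤ r ^ n * ‖x‖ ^ 2 := by
      intro n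
      rw [hIlin n]
      have h := ENNReal.toReal_mono ENNReal.ofReal_ne_top (hIbound n)
      rwa [ENNReal.toReal_ofReal (by positivity)] at h
    have hlb : ∀ n, 0 ≤ ∫ ω, ‖residualProd Ψ ω n x‖ ^ 2 ∂(ℙ : Measure Ω) := fun n =>
      integral_nonneg fun ω => by positivity
    have hg : Tendsto (fun n : ℕ => r ^ n * ‖x‖ ^ 2) atTop (nhds 0) := by
      simpa using (tendsto_pow_atTop_nhds_zero_of_lt_one hr0 hr1).mul_const (‖x‖ ^ 2)
    exact tendsto_of_tendsto_of_tendsto_of_le_of_le tendsto_const_nhds hg hlb hub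
  have hfinal := (tendsto_const_nhds (x := ‖x‖ ^ 2) (f := atTop (α := ℕ))).sub hIto0
  rw [sub_zero] at hfinal
  exact Tendsto.congr (fun n => (hIeq n).symm) hfinal
end
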